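/- Let Γ be a metric graph with simple model (G, ℓ) where every edge has length at least 1. Define Ψ : C(G) → Zh(Γ) as follows: for each vertex v with degree d_v, let B_v be the ball of radius 1/(4 d_v) around v in Γ; for g : V(G) → ℝ, Ψ(g) equals g(v) on B_v and is affine linear on the remaining middle segment of each edge. Then Ψ is injective linear, and for every g ≠ 0: (∫_Γ (Ψg)'² dx)/(∫_Γ (Ψg)² dx) ≤ 8 · (Σ_{{u,v} ∈ E} (g(u) − g(v))²)/(Σ_v g(v)²). -/

import Mathlib

open BigOperators MeasureTheory

variable {V : Type*} [Fintype V] [DecidableEq V]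

/-- The Dirichlet energy `∫_Γ f'² dx` of a function on a metric graph given by
per-edge functions (each edge counted twice, whence the `1/2`). -/
noncomputable def mgEnergy (G : SimpleGraph V) [DecidableRel G.Adj]
    (ℓ : V → V → ℝ) (f : V → V → ℝ → ℝ) : ℝ :=
  (1/2) * ∑ u, ∑ v, if G.Adj u v then
    ∫ x in (0:ℝ)..(ℓ u v), (deriv (f u v) x) ^ 2 else 0

/-- The squared `L²` norm `∫_Γ f² dx` of a function on a metric graph. -/
noncomputable def mgNorm (G : SimpleGraph V) [DecidableRel G.Adj]
    (ℓ : V → V → ℝ) (f : V → V → ℝ → ℝ) : ℝ :=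
  (1/2) * ∑ u, ∑ v, if G.Adj u v then
    ∫ x in (0:ℝ)..(ℓ u v), (f u v x) ^ 2 else 0

/-- The extension map `Ψ`: for `g : V → ℝ`, `Ψ g` equals `g v` on the ball
`B_v` of radius `1/(4 d_v)` around each vertex `v`, and is affine linear on
the middle segment of each edge. (The edge `{u,v}` is parametrized by
`[0, ℓ u v]` starting at `u`.) -/
noncomputable def Psi (G : SimpleGraph V) [DecidableRel G.Adj]
    (ℓ : V → V → ℝ) (g : V → ℝ) : V → V → ℝ → ℝ :=
  fun u v x =>
    if x ≤ 1 / (4 * (G.degree u : ℝ)) then g u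
    else if ℓ u v - 1 / (4 * (G.degree v : ℝ)) ≤ x then g v
    else g u + (x - 1 / (4 * (G.degree u : ℝ))) * (g v - g u) /
      (ℓ u v - 1 / (4 * (G.degree u : ℝ)) - 1 / (4 * (G.degree v : ℝ)))

open Set in
private lemma edge_calc (gu gv a b L : ℝ) (ha : 0 < a) (hb : 0 < b) (hc : (1:ℝ)/2 ≤ L - a - b) :
    (∫ x in (0:ℝ)..L, (deriv (fun x => if x ≤ a then gu else if L - b ≤ x then gv
        else gu + (x - a) * (gv - gu) / (L - a - b)) x) ^ 2)
      = (gv - gu) ^ 2 / (L - a - b) ∧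
    a * gu ^ 2 + b * gv ^ 2 ≤
      ∫ x in (0:ℝ)..L, (if x ≤ a then gu else if L - b ≤ x then gv
        else gu + (x - a) * (gv - gu) / (L - a - b)) ^ 2 := by
  set c : ℝ := L - a - b with hcdef
  have hcpos : 0 < c := lt_of_lt_of_le (by norm_num) hc
  have haLb : a < L - b := by simp only [hcdef] at hcpos; linarith
  have hbL : L - b < L := by linarith
  have h0L : (0:ℝ) ≤ L := by linarith
  set f : ℝ → ℝ := fun x => if x ≤ a then gu else if L - b ≤ x then gv
        else gu + (x - a) * (gv - gu) / c with hfdef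
  set s : ℝ := (gv - gu) / c with hsdef
  -- clamp form
  have hfe : ∀ x, f x = gu + s * (min (max x a) (L - b) - a) := by
    intro x
    simp only [hfdef]
    split_ifs with h1 h2
    · rw [max_eq_right h1, min_eq_left haLb.le]; ring
    · rw [max_eq_left (by linarith), min_eq_right h2]
      have hs : s * c = gv - gu := by rw [hsdef]; field_simp
      rw [show L - b - a = c by linarith]; linarith
    · rw [max_eq_left (by linarith), min_eq_left (by linarith)]
      rw [hsdef]
      ring
  have hf : Continuous f := by
    have : f = fun x => gu + s * (min (max x a) (L - b) - a) := funext hfe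
    rw [this]; fun_prop
  -- derivative facts
  have hd1 : ∀ x, x < a → deriv f x = 0 := by
    intro x hx
    have hev : f =ᶠ[nhds x] fun _ => gu := by
      filter_upwards [Iio_mem_nhds hx] with y hy
      simp only [hfdef, if_pos (le_of_lt (Set.mem_Iio.1 hy))]
    rw [hev.deriv_eq, deriv_const]
  have hd3 : ∀ x, L - b < x → deriv f x = 0 := by
    intro x hx
    have hev : f =ᶠ[nhds x] fun _ => gv := by
      filter_upwards [Ioi_mem_nhds hx] with y hy
      have : ¬ y ≤ a := by push_neg; have := Set.mem_Ioi.1 hy; linarith [haLb]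
      simp only [hfdef, if_neg this, if_pos (le_of_lt (Set.mem_Ioi.1 hy))]
    rw [hev.deriv_eq, deriv_const]
  have hd2 : ∀ x, a < x → x < L - b → deriv f x = s := by
    intro x hx1 hx2
    have hev : f =ᶠ[nhds x] fun y => gu + (y - a) * (gv - gu) / c := by
      filter_upwards [Ioo_mem_nhds hx1 hx2] with y hy
      have h1 : ¬ y ≤ a := not_le.2 hy.1
      have h2 : ¬ L - b ≤ y := not_le.2 hy.2
      simp only [hfdef, if_neg h1, if_neg h2]
    have hda : HasDerivAt (fun y => gu + (y - a) * (gv - gu) / c) s x := by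
      have := (((hasDerivAt_id x).sub_const a).mul_const (gv - gu)).div_const c
      simpa [hsdef] using this.const_add gu
    rw [hev.deriv_eq, hda.deriv]
  -- energy integral
  have henergy : (∫ x in (0:ℝ)..L, (deriv f x) ^ 2) = (gv - gu) ^ 2 / c := by
    have hnull : ∀ᵐ x ∂(volume : Measure ℝ), x ∉ ({a, L - b} : Set ℝ) := by
      have : (volume : Measure ℝ) ({a, L - b} : Set ℝ) = 0 :=
        ((Set.finite_singleton (L - b)).insert a).measure_zero _
      exact (MeasureTheory.measure_eq_zero_iff_ae_notMem).1 this
    have hcongr : (∫ x in (0:ℝ)..L, (deriv f x) ^ 2)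
        = ∫ x in (0:ℝ)..L, (Ioc a (L - b)).indicator (fun _ => s ^ 2) x := by
      apply intervalIntegral.integral_congr_ae
      filter_upwards [hnull] with x hx _
      simp only [Set.mem_insert_iff, Set.mem_singleton_iff, not_or] at hx
      rcases lt_trichotomy x a with h | h | h
      · rw [hd1 x h, Set.indicator_of_notMem (by simp [Set.mem_Ioc]; intro h'; linarith)]
        norm_num
      · exact absurd h hx.1
      · rcases lt_trichotomy x (L - b) with h' | h' | h'
        · rw [hd2 x h h', Set.indicator_of_mem (Set.mem_Ioc.2 ⟨h, h'.le⟩)]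
        · exact absurd h' hx.2
        · rw [hd3 x h', Set.indicator_of_notMem (by simp [Set.mem_Ioc]; intro h''; linarith)]
          norm_num
    rw [hcongr, intervalIntegral.integral_of_le h0L,
      MeasureTheory.integral_indicator measurableSet_Ioc,
      MeasureTheory.Measure.restrict_restrict measurableSet_Ioc]
    have hsub : Ioc a (L - b) ∩ Ioc 0 L = Ioc a (L - b) := by
      apply Set.inter_eq_left.2
      intro x hx
      exact Set.mem_Ioc.2 ⟨lt_of_le_of_lt ha.le hx.1, le_trans hx.2 hbL.le⟩
    rw [hsub, MeasureTheory.setIntegral_const, Real.volume_real_Ioc_of_le (by linarith), smul_eq_mul]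
    simp only [hsdef]
    field_simp
    ring
  constructor
  · exact henergy
  · -- norm lower bound
    have hint : ∀ p q : ℝ, IntervalIntegrable (fun x => f x ^ 2) volume p q :=
      fun p q => ((hf.pow 2).intervalIntegrable p q)
    have hsplit : (∫ x in (0:ℝ)..L, f x ^ 2)
        = (∫ x in (0:ℝ)..a, f x ^ 2) + (∫ x in a..(L - b), f x ^ 2)
          + (∫ x in (L - b)..L, f x ^ 2) := by
      rw [intervalIntegral.integral_add_adjacent_intervals (hint 0 a) (hint a (L - b)),
        intervalIntegral.integral_add_adjacent_intervals (hint 0 (L - b)) (hint (L - b) L)]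
    have hI1 : (∫ x in (0:ℝ)..a, f x ^ 2) = a * gu ^ 2 := by
      have : (∫ x in (0:ℝ)..a, f x ^ 2) = ∫ x in (0:ℝ)..a, gu ^ 2 := by
        apply intervalIntegral.integral_congr_ae
        apply Filter.Eventually.of_forall
        intro x hx
        rw [Set.uIoc_of_le ha.le] at hx
        simp only [hfdef, if_pos hx.2]
      rw [this, intervalIntegral.integral_const, smul_eq_mul]; ring
    have hI3 : (∫ x in (L - b)..L, f x ^ 2) = b * gv ^ 2 := by
      have : (∫ x in (L - b)..L, f x ^ 2) = ∫ x in (L - b)..L, gv ^ 2 := by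
        apply intervalIntegral.integral_congr_ae
        apply Filter.Eventually.of_forall
        intro x hx
        rw [Set.uIoc_of_le hbL.le] at hx
        have h1 : ¬ x ≤ a := by push_neg; linarith [hx.1]
        simp only [hfdef, if_neg h1, if_pos hx.1.le]
      rw [this, intervalIntegral.integral_const, smul_eq_mul]; ring
    have hI2 : 0 ≤ ∫ x in a..(L - b), f x ^ 2 :=
      intervalIntegral.integral_nonneg haLb.le (fun x _ => sq_nonneg _)
    rw [hsplit, hI1, hI3]
    linarith

/-- for a metric graph with simple model `(G, ℓ)` whose edges all
have length at least `1`, the map `Ψ` is injective and linear, and its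
Rayleigh-quotient distortion is at most `8`: for every `g ≠ 0`,
`(∫ (Ψg)'²)/(∫ (Ψg)²) ≤ 8 (∑_{{u,v} ∈ E} (g u - g v)²)/(∑_v g v²)`. -/
theorem stmt12 (G : SimpleGraph V) [DecidableRel G.Adj] (hconn : G.Connected)
    (ℓ : V → V → ℝ) (hsym : ∀ u v, ℓ u v = ℓ v u)
    (hge1 : ∀ u v, G.Adj u v → 1 ≤ ℓ u v)
    (hdeg : ∀ v, 0 < G.degree v) :
    Function.Injective (Psi G ℓ) ∧ IsLinearMap ℝ (Psi G ℓ) ∧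
      ∀ g : V → ℝ, g ≠ 0 →
        mgEnergy G ℓ (Psi G ℓ g) / mgNorm G ℓ (Psi G ℓ g) ≤
          8 * ((1/2) * ∑ u, ∑ v, if G.Adj u v then (g u - g v) ^ 2 else 0) /
            (∑ v, (g v) ^ 2) := by
  have hcount : ∀ (u : V) (cst : ℝ),
      (∑ v, if G.Adj u v then cst else 0) = (G.degree u : ℝ) * cst := by
    intro u cst
    rw [← Finset.sum_filter, Finset.sum_const, nsmul_eq_mul]
    congr 2
    simp [SimpleGraph.degree, SimpleGraph.neighborFinset_eq_filter, Finset.filter]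
  refine ⟨?_, ?_, ?_⟩
  · -- injective
    intro g g' h
    funext v
    have hv : (0:ℝ) ≤ 1 / (4 * (G.degree v : ℝ)) := by
      have := hdeg v
      positivity
    have h2 := congrFun (congrFun (congrFun h v) v) 0
    simpa only [Psi, if_pos hv] using h2
  · -- linear
    constructor
    · intro g g'
      funext u v x
      simp only [Psi, Pi.add_apply]
      split_ifs <;> ring
    · intro c g
      funext u v x
      simp only [Psi, Pi.smul_apply, smul_eq_mul]
      split_ifs <;> ring
  · -- Rayleigh bound
    intro g hg
    set S : ℝ := ∑ v, g v ^ 2 with hSdef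
    set Q : ℝ := (1/2) * ∑ u, ∑ v, if G.Adj u v then (g u - g v) ^ 2 else 0 with hQdef
    have hSpos : 0 < S := by
      obtain ⟨v, hv⟩ := Function.ne_iff.1 hg
      exact Finset.sum_pos' (fun i _ => sq_nonneg _)
        ⟨v, Finset.mem_univ v, pow_two_pos_of_ne_zero hv⟩
    -- per-edge facts
    have key : ∀ u v, G.Adj u v →
        (0 ≤ ∫ x in (0:ℝ)..(ℓ u v), (deriv (Psi G ℓ g u v) x) ^ 2) ∧
        ((∫ x in (0:ℝ)..(ℓ u v), (deriv (Psi G ℓ g u v) x) ^ 2) ≤ 2 * (g u - g v) ^ 2) ∧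
        (1/(4*(G.degree u:ℝ)) * g u ^ 2 + 1/(4*(G.degree v:ℝ)) * g v ^ 2 ≤
          ∫ x in (0:ℝ)..(ℓ u v), (Psi G ℓ g u v x) ^ 2) := by
      intro u v huv
      have hdu : (1:ℝ) ≤ (G.degree u : ℝ) := by exact_mod_cast hdeg u
      have hdv : (1:ℝ) ≤ (G.degree v : ℝ) := by exact_mod_cast hdeg v
      have ha : 0 < 1/(4*(G.degree u:ℝ)) := by positivity
      have hb : 0 < 1/(4*(G.degree v:ℝ)) := by positivity
      have hau : 1/(4*(G.degree u:ℝ)) ≤ 1/4 :=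
        one_div_le_one_div_of_le (by norm_num) (by linarith)
      have hbv : 1/(4*(G.degree v:ℝ)) ≤ 1/4 :=
        one_div_le_one_div_of_le (by norm_num) (by linarith)
      have hL := hge1 u v huv
      have hcge : (1:ℝ)/2 ≤ ℓ u v - 1/(4*(G.degree u:ℝ)) - 1/(4*(G.degree v:ℝ)) := by
        linarith
      have hke := edge_calc (g u) (g v) (1/(4*(G.degree u:ℝ))) (1/(4*(G.degree v:ℝ)))
        (ℓ u v) ha hb hcge
      have he1 : (∫ x in (0:ℝ)..(ℓ u v), (deriv (Psi G ℓ g u v) x) ^ 2)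
          = (g v - g u) ^ 2 / (ℓ u v - 1/(4*(G.degree u:ℝ)) - 1/(4*(G.degree v:ℝ))) := hke.1
      have he2 : 1/(4*(G.degree u:ℝ)) * g u ^ 2 + 1/(4*(G.degree v:ℝ)) * g v ^ 2 ≤
          ∫ x in (0:ℝ)..(ℓ u v), (Psi G ℓ g u v x) ^ 2 := hke.2
      obtain ⟨c, hcdef⟩ : ∃ c : ℝ,
          ℓ u v - 1/(4*(G.degree u:ℝ)) - 1/(4*(G.degree v:ℝ)) = c := ⟨_, rfl⟩
      rw [hcdef] at he1 hcge
      have hcpos : 0 < c := lt_of_lt_of_le (by norm_num) hcge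
      refine ⟨?_, ?_, he2⟩
      · rw [he1]; positivity
      · rw [he1, div_le_iff₀ hcpos]
        have h1 : (g v - g u) ^ 2 = (g u - g v) ^ 2 := by ring
        rw [h1]
        have h2 : (g u - g v) ^ 2 * 1 ≤ (g u - g v) ^ 2 * (2 * c) := by
          apply mul_le_mul_of_nonneg_left _ (sq_nonneg _)
          linarith
        linarith
    -- energy bounds
    have hE0 : 0 ≤ mgEnergy G ℓ (Psi G ℓ g) := by
      rw [mgEnergy]
      have : (0:ℝ) ≤ ∑ u, ∑ v, if G.Adj u v then
          ∫ x in (0:ℝ)..(ℓ u v), (deriv (Psi G ℓ g u v) x) ^ 2 else 0 := by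
        apply Finset.sum_nonneg; intro u _
        apply Finset.sum_nonneg; intro v _
        by_cases h : G.Adj u v
        · simp only [if_pos h]; exact (key u v h).1
        · simp [h]
      linarith
    have hE_le : mgEnergy G ℓ (Psi G ℓ g) ≤ 2 * Q := by
      rw [mgEnergy, hQdef]
      have hsum : (∑ u, ∑ v, if G.Adj u v then
            ∫ x in (0:ℝ)..(ℓ u v), (deriv (Psi G ℓ g u v) x) ^ 2 else 0)
          ≤ ∑ u, ∑ v, if G.Adj u v then 2 * (g u - g v) ^ 2 else 0 := by
        apply Finset.sum_le_sum; intro u _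
        apply Finset.sum_le_sum; intro v _
        by_cases h : G.Adj u v
        · simp only [if_pos h]; exact (key u v h).2.1
        · simp [h]
      have h2 : (∑ u, ∑ v, if G.Adj u v then 2 * (g u - g v) ^ 2 else 0)
          = 2 * ∑ u, ∑ v, if G.Adj u v then (g u - g v) ^ 2 else 0 := by
        rw [Finset.mul_sum]
        apply Finset.sum_congr rfl; intro u _
        rw [Finset.mul_sum]
        apply Finset.sum_congr rfl; intro v _
        split_ifs <;> ring
      linarith
    -- norm bound
    have hN : S / 4 ≤ mgNorm G ℓ (Psi G ℓ g) := by
      rw [mgNorm]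
      have hsum : (∑ u, ∑ v, if G.Adj u v then
            1/(4*(G.degree u:ℝ)) * g u ^ 2 + 1/(4*(G.degree v:ℝ)) * g v ^ 2 else 0)
          ≤ ∑ u, ∑ v, if G.Adj u v then
            ∫ x in (0:ℝ)..(ℓ u v), (Psi G ℓ g u v x) ^ 2 else 0 := by
        apply Finset.sum_le_sum; intro u _
        apply Finset.sum_le_sum; intro v _
        by_cases h : G.Adj u v
        · simp only [if_pos h]; exact (key u v h).2.2
        · simp [h]
      have hsplit : (∑ u, ∑ v, if G.Adj u v then
            1/(4*(G.degree u:ℝ)) * g u ^ 2 + 1/(4*(G.degree v:ℝ)) * g v ^ 2 else 0)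
          = (∑ u, ∑ v, if G.Adj u v then 1/(4*(G.degree u:ℝ)) * g u ^ 2 else 0)
            + (∑ u, ∑ v, if G.Adj u v then 1/(4*(G.degree v:ℝ)) * g v ^ 2 else 0) := by
        rw [← Finset.sum_add_distrib]
        apply Finset.sum_congr rfl; intro u _
        rw [← Finset.sum_add_distrib]
        apply Finset.sum_congr rfl; intro v _
        split_ifs <;> ring
      have hterm : ∀ w : V, (G.degree w : ℝ) * (1/(4*(G.degree w:ℝ)) * g w ^ 2)
          = g w ^ 2 / 4 := by
        intro w
        have hdw : (G.degree w : ℝ) ≠ 0 := by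
          have := hdeg w; positivity
        field_simp
      have h1 : (∑ u, ∑ v, if G.Adj u v then 1/(4*(G.degree u:ℝ)) * g u ^ 2 else 0)
          = S / 4 := by
        have : ∀ u : V, (∑ v, if G.Adj u v then 1/(4*(G.degree u:ℝ)) * g u ^ 2 else 0)
            = g u ^ 2 / 4 := fun u => by rw [hcount u _, hterm u]
        rw [Finset.sum_congr rfl (fun u _ => this u), hSdef, ← Finset.sum_div]
      have h2 : (∑ u, ∑ v, if G.Adj u v then 1/(4*(G.degree v:ℝ)) * g v ^ 2 else 0)
          = S / 4 := by
        rw [Finset.sum_comm]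
        have : ∀ v : V, (∑ u, if G.Adj u v then 1/(4*(G.degree v:ℝ)) * g v ^ 2 else 0)
            = g v ^ 2 / 4 := by
          intro v
          have hadj : ∀ u : V, (if G.Adj u v then 1/(4*(G.degree v:ℝ)) * g v ^ 2 else 0)
              = (if G.Adj v u then 1/(4*(G.degree v:ℝ)) * g v ^ 2 else 0) := by
            intro u
            by_cases h : G.Adj u v
            · rw [if_pos h, if_pos h.symm]
            · rw [if_neg h, if_neg fun h' => h h'.symm]
          rw [Finset.sum_congr rfl (fun u _ => hadj u), hcount v _, hterm v]
        rw [Finset.sum_congr rfl (fun v _ => this v), hSdef, ← Finset.sum_div]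
      rw [hsplit, h1, h2] at hsum
      linarith
    have hNpos : 0 < mgNorm G ℓ (Psi G ℓ g) := lt_of_lt_of_le (by positivity) hN
    have hS4 : (0:ℝ) < S / 4 := by positivity
    calc mgEnergy G ℓ (Psi G ℓ g) / mgNorm G ℓ (Psi G ℓ g)
        ≤ mgEnergy G ℓ (Psi G ℓ g) / (S / 4) := div_le_div_of_nonneg_left hE0 hS4 hN
      _ ≤ (2 * Q) / (S / 4) := (div_le_div_iff_of_pos_right hS4).2 hE_le
      _ = 8 * Q / S := by
          field_simp
          ring
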